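/- Let G be a group, n ≥ 3, and let a, b ∈ End F_n(G) both have rank 1, say (g x_t)a = (g·a_t) x_j and (g x_t)b = (g·b_t) x_k for elements a_t, b_t ∈ G (t = 1,…,n) and fixed indices j, k. Then ker a = ker b (i.e., for all x, y ∈ F_n(G), xa = ya if and only if xb = yb) if and only if there exists g ∈ G with a_t·g = b_t for all t ∈ {1,…,n}. -/

import Mathlib

/-- An endomorphism of the rank-`n` free left `G`-act `F_n(G) = G × Fin n`
(the formal symbols `g x_i` are the pairs `(g, i)`), where the action is
`h • (g, i) = (h * g, i)` and equivariance says `(h • x) a = h • (x a)`. -/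
structure ActEnd (G : Type*) [Group G] (n : ℕ) : Type _ where
  toFun : G × Fin n → G × Fin n
  equivariant : ∀ (h : G) (x : G × Fin n),
    toFun (h * x.1, x.2) = (h * (toFun x).1, (toFun x).2)

namespace ActEnd

variable {G : Type*} [Group G] {n : ℕ}

/-- Composition is written left-to-right: `x (a * b) = (x a) b`. -/
instance : Monoid (ActEnd G n) where
  mul a b := ⟨fun x => b.toFun (a.toFun x), by
    intro h x
    try dsimp only
    rw [a.equivariant h x, b.equivariant]⟩
  one := ⟨id, fun _ _ => rfl⟩
  mul_assoc _ _ _ := rfl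
  one_mul _ := rfl
  mul_one _ := rfl

@[simp] theorem mul_toFun (a b : ActEnd G n) (x : G × Fin n) :
    (a * b).toFun x = b.toFun (a.toFun x) := rfl

theorem ext' {a b : ActEnd G n} (h : a.toFun = b.toFun) : a = b := by
  cases a; cases b; cases h; rfl

/-- The rank of an endomorphism of `F_n(G)`: the number of indices `j` such
that `G x_j` meets the image. -/
noncomputable def rank (a : ActEnd G n) : ℕ :=
  Nat.card {j : Fin n // ∃ x, (a.toFun x).2 = j}

end ActEnd

/-- For rank-1 endomorphisms `a, b` of `F_n(G)` given by
`(g x_t) a = (g * ac t) x_j` and `(g x_t) b = (g * bc t) x_k`, the kernels of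
`a` and `b` coincide iff there is `g ∈ G` with `ac t * g = bc t` for all `t`. -/
theorem stmt3 {G : Type*} [Group G] {n : ℕ} (hn : 3 ≤ n)
    (a b : ActEnd G n) (ac bc : Fin n → G) (j k : Fin n)
    (ha : ∀ (g : G) (t : Fin n), a.toFun (g, t) = (g * ac t, j))
    (hb : ∀ (g : G) (t : Fin n), b.toFun (g, t) = (g * bc t, k)) :
    (∀ x y : G × Fin n, a.toFun x = a.toFun y ↔ b.toFun x = b.toFun y) ↔
      ∃ g : G, ∀ t : Fin n, ac t * g = bc t := by
  have hn0 : 0 < n := by omega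
  constructor
  · intro h
    refine ⟨(ac ⟨0, hn0⟩)⁻¹ * bc ⟨0, hn0⟩, fun t => ?_⟩
    have key := (h (1, t) ((ac t) * (ac ⟨0, hn0⟩)⁻¹, ⟨0, hn0⟩)).mp ?_
    · rw [hb, hb] at key
      have := congrArg Prod.fst key
      simp only at this
      rw [one_mul] at this
      rw [← mul_assoc]; exact this.symm
    · rw [ha, ha]
      simp [mul_assoc]
  · rintro ⟨g, hg⟩ ⟨u, t⟩ ⟨v, s⟩
    rw [ha, ha, hb, hb, Prod.mk.injEq, Prod.mk.injEq]
    constructor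
    · rintro ⟨h1, -⟩
      refine ⟨?_, rfl⟩
      rw [← hg t, ← hg s, ← mul_assoc, ← mul_assoc, h1]
    · rintro ⟨h1, -⟩
      refine ⟨?_, rfl⟩
      rw [← hg t, ← hg s] at h1
      rw [← mul_assoc, ← mul_assoc] at h1
      exact mul_right_cancel h1
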